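/- Let p be a prime and 1 ≤ k ≤ p−1. Let A = (a_i)_{i≥0} be the p-periodic sequence over F_p with a_i = binom(i+k, k) mod p. Then the linear complexity of A equals k + 1. -/

import Mathlib

open Finset in
lemma binom_rec_int (k i : ℕ) :
    (∑ ℓ ∈ Finset.range (k + 2),
      ((-1 : ℤ) ^ (k + 1 - ℓ) * ((k + 1).choose ℓ)) * (((i + ℓ + k).choose k : ℕ) : ℤ)) = 0 := by
  have h1 : (fwdDiff (1 : ℕ))^[k] (fun x : ℕ => ((x.choose k : ℕ) : ℤ)) = fun _ => 1 := by
    simpa using fwdDiff_iter_choose 0 k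
  have h0 : (fwdDiff (1 : ℕ))^[k + 1] (fun x : ℕ => ((x.choose k : ℕ) : ℤ)) (i + k) = 0 := by
    rw [Function.iterate_succ_apply', h1]
    simp [fwdDiff]
  rw [fwdDiff_iter_eq_sum_shift] at h0
  rw [← h0]
  apply Finset.sum_congr rfl
  intro ℓ hℓ
  rw [smul_eq_mul]
  have e : i + k + ℓ • 1 = i + ℓ + k := by simp only [smul_eq_mul, mul_one]; omega
  rw [e]

lemma choose_p_add_self (p k : ℕ) (hp : p.Prime) (hk : k < p) :
    (((p + k).choose k : ℕ) : ZMod p) = 1 := by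
  rw [Nat.add_choose_eq]
  push_cast
  rw [Finset.sum_eq_single (0, k)]
  · simp
  · rintro ⟨a, b⟩ hab hne
    rw [Finset.HasAntidiagonal.mem_antidiagonal] at hab
    have ha : a ≠ 0 := by
      rintro rfl; exact hne (by simp [← hab])
    have : p ∣ p.choose a := hp.dvd_choose_self ha (by omega)
    rw [(ZMod.natCast_eq_zero_iff _ _).mpr this]
    ring
  · intro h
    exact absurd (Finset.HasAntidiagonal.mem_antidiagonal.mpr (by simp)) h

lemma choose_p_add_lt (p m k : ℕ) (hp : p.Prime) (hm : m < k) (hk : k < p) :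
    (((p + m).choose k : ℕ) : ZMod p) = 0 := by
  have : p ∣ (p + m).choose k := hp.dvd_choose hk (by omega) (by omega)
  exact (ZMod.natCast_eq_zero_iff _ _).mpr this

/-- The `N`-th linear complexity of a sequence `s` over a field: the length of a
shortest linear recurrence satisfied by the first `N` terms. -/
noncomputable def linComplexityN {F : Type*} [Field F] (s : ℕ → F) (N : ℕ) : ℕ :=
  sInf {L | ∃ c : Fin L → F, ∀ i, i + L < N →
    s (i + L) + ∑ ℓ : Fin L, c ℓ * s (i + ℓ.1) = 0}

open Classical in
/-- The `N`-th expansion complexity of a sequence `s` over a field: `0` if the first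
`N` terms vanish, otherwise the least total degree of a nonzero bivariate polynomial
`h(x,y)` with `h(x, G(x)) ≡ 0 mod x^N`, where `G` is the generating function of `s`. -/
noncomputable def expComplexityN {F : Type*} [Field F] (s : ℕ → F) (N : ℕ) : ℕ :=
  if ∀ i < N, s i = 0 then 0 else
  sInf {d | ∃ h : MvPolynomial (Fin 2) F, h ≠ 0 ∧ h.totalDegree = d ∧
    (PowerSeries.X : PowerSeries F) ^ N ∣
      MvPolynomial.aeval ![(PowerSeries.X : PowerSeries F), PowerSeries.mk s] h}

theorem linComplexity_binomial_sequence (p k : ℕ) [Fact p.Prime]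
    (hk1 : 1 ≤ k) (hk2 : k ≤ p - 1) :
    (⨆ N, (linComplexityN (fun i => (((i + k).choose k : ℕ) : ZMod p)) N : ℕ∞)) = ((k + 1 : ℕ) : ℕ∞) := by
  have hp : p.Prime := Fact.out
  have hp2 : 2 ≤ p := hp.two_le
  have hkp : k < p := by omega
  set s : ℕ → ZMod p := fun i => (((i + k).choose k : ℕ) : ZMod p) with hs
  set c : Fin (k + 1) → ZMod p :=
    fun ℓ => (-1 : ZMod p) ^ (k + 1 - ℓ.1) * (((k + 1).choose ℓ.1 : ℕ) : ZMod p) with hc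
  have hrec : ∀ i : ℕ, s (i + (k + 1)) + ∑ ℓ : Fin (k + 1), c ℓ * s (i + ℓ.1) = 0 := by
    intro i
    have h1 := congrArg (fun z : ℤ => (z : ZMod p)) (binom_rec_int k i)
    push_cast at h1
    rw [Finset.sum_range_succ] at h1
    simp only [Nat.sub_self, pow_zero, Nat.choose_self, Nat.cast_one, one_mul, mul_one] at h1
    simp only [hs, hc]
    rw [Fin.sum_univ_eq_sum_range
      (fun ℓ : ℕ => (-1 : ZMod p) ^ (k + 1 - ℓ) * (((k + 1).choose ℓ : ℕ) : ZMod p) *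
        (((i + ℓ + k).choose k : ℕ) : ZMod p)) (k + 1)]
    linear_combination h1
  have hmem : ∀ N, (k + 1) ∈ {L | ∃ c' : Fin L → ZMod p, ∀ i, i + L < N →
      s (i + L) + ∑ ℓ : Fin L, c' ℓ * s (i + ℓ.1) = 0} :=
    fun N => ⟨c, fun i _ => hrec i⟩
  have upper : ∀ N, linComplexityN s N ≤ k + 1 := by
    intro N
    unfold linComplexityN
    exact Nat.sInf_le (hmem N)
  have lower : ∀ L ∈ {L | ∃ c' : Fin L → ZMod p, ∀ i, i + L < p + 1 →
      s (i + L) + ∑ ℓ : Fin L, c' ℓ * s (i + ℓ.1) = 0}, k + 1 ≤ L := by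
    intro L hL
    by_contra hlt
    push_neg at hlt
    obtain ⟨d, hd⟩ := hL
    have h := hd (p - L) (by omega)
    have e1 : p - L + L = p := by omega
    rw [e1] at h
    have htop : s p = 1 := by
      have : p + k = p + k := rfl
      simpa [hs] using choose_p_add_self p k hp hkp
    have hz : ∀ ℓ : Fin L, s (p - L + ℓ.1) = 0 := by
      intro ℓ
      have hℓ := ℓ.2
      have e2 : p - L + ℓ.1 + k = p + (k - L + ℓ.1) := by omega
      simp only [hs]
      rw [e2]
      exact choose_p_add_lt p (k - L + ℓ.1) k hp (by omega) hkp
    rw [htop] at h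
    simp only [hz, mul_zero, Finset.sum_const_zero, add_zero] at h
    exact one_ne_zero h
  have hval : linComplexityN s (p + 1) = k + 1 := by
    refine le_antisymm (upper _) ?_
    unfold linComplexityN
    exact le_csInf ⟨_, hmem (p + 1)⟩ lower
  apply le_antisymm
  · exact iSup_le fun N => Nat.cast_le.mpr (upper N)
  · calc ((k + 1 : ℕ) : ℕ∞) = (linComplexityN s (p + 1) : ℕ∞) := by rw [hval]
      _ ≤ _ := le_iSup (fun N => (linComplexityN s N : ℕ∞)) (p + 1)
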